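/- Fix λ₁, λ₂ ∈ ℝ and let Φ(z) := −1/(2 sin²(z/2)) − λ₁/z² + λ₂ for z ∈ (0, π). Then Φ has at most two zeros in (0, π). -/

import Mathlib

open Real Set

lemma aux1 : ∀ y ∈ Set.Ioo (0:ℝ) π, 0 < Real.sin y - y * Real.cos y := by
  have hmono : StrictMonoOn (fun y : ℝ => Real.sin y - y * Real.cos y) (Set.Icc 0 π) := by
    apply strictMonoOn_of_deriv_pos (convex_Icc 0 π)
    · fun_prop
    · intro y hy
      rw [interior_Icc] at hy
      have hd : HasDerivAt (fun y : ℝ => Real.sin y - y * Real.cos y) (y * Real.sin y) y := by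
        have := (Real.hasDerivAt_sin y).sub ((hasDerivAt_id y).mul (Real.hasDerivAt_cos y))
        refine this.congr_deriv ?_; simp [id_def]; try ring
      rw [hd.deriv]
      exact mul_pos hy.1 (Real.sin_pos_of_pos_of_lt_pi hy.1 hy.2)
  intro y hy
  have := hmono (Set.left_mem_Icc.2 Real.pi_pos.le) ⟨hy.1.le, hy.2.le⟩ hy.1
  simpa using this

lemma aux2 : ∀ y ∈ Set.Ioo (0:ℝ) π, 0 < 2 - 2 * Real.cos y - y * Real.sin y := by
  have hmono : StrictMonoOn (fun y : ℝ => 2 - 2 * Real.cos y - y * Real.sin y) (Set.Icc 0 π) := by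
    apply strictMonoOn_of_deriv_pos (convex_Icc 0 π)
    · fun_prop
    · intro y hy
      rw [interior_Icc] at hy
      have hd : HasDerivAt (fun y : ℝ => 2 - 2 * Real.cos y - y * Real.sin y)
          (Real.sin y - y * Real.cos y) y := by
        have := ((hasDerivAt_const y (2:ℝ)).sub ((Real.hasDerivAt_cos y).const_mul 2)).sub
          ((hasDerivAt_id y).mul (Real.hasDerivAt_sin y))
        refine this.congr_deriv ?_; simp [id_def]; try ring
      rw [hd.deriv]
      exact aux1 y hy
  intro y hy
  have := hmono (Set.left_mem_Icc.2 Real.pi_pos.le) ⟨hy.1.le, hy.2.le⟩ hy.1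
  simpa using this

lemma aux3 : ∀ y ∈ Set.Ioo (0:ℝ) π, 0 < y * (2 + Real.cos y) - 3 * Real.sin y := by
  have hmono : StrictMonoOn (fun y : ℝ => y * (2 + Real.cos y) - 3 * Real.sin y) (Set.Icc 0 π) := by
    apply strictMonoOn_of_deriv_pos (convex_Icc 0 π)
    · fun_prop
    · intro y hy
      rw [interior_Icc] at hy
      have hd : HasDerivAt (fun y : ℝ => y * (2 + Real.cos y) - 3 * Real.sin y)
          (2 - 2 * Real.cos y - y * Real.sin y) y := by
        have := ((hasDerivAt_id y).mul ((hasDerivAt_const y (2:ℝ)).add (Real.hasDerivAt_cos y))).sub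
          ((Real.hasDerivAt_sin y).const_mul 3)
        refine this.congr_deriv ?_; simp [id_def]; try ring
      rw [hd.deriv]
      exact aux2 y hy
  intro y hy
  have := hmono (Set.left_mem_Icc.2 Real.pi_pos.le) ⟨hy.1.le, hy.2.le⟩ hy.1
  simpa using this

lemma sinhalf_pos {z : ℝ} (hz : 0 < z) (hzπ : z < π) : 0 < Real.sin (z/2) :=
  Real.sin_pos_of_pos_of_lt_pi (by linarith) (by linarith [Real.pi_pos])

lemma hv (l₂ z : ℝ) (hz : 0 < z) (hzπ : z < π) :
    HasDerivAt (fun z => 1/(2*Real.sin (z/2)^2) - z*Real.cos (z/2)/(4*Real.sin (z/2)^3) - l₂)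
      ((z*(Real.sin (z/2)^2 + 3*Real.cos (z/2)^2) - 6*Real.sin (z/2)*Real.cos (z/2)) /
        (8*Real.sin (z/2)^4)) z := by
  have hS := (sinhalf_pos hz hzπ).ne'
  have h2 : HasDerivAt (fun z : ℝ => z/2) (1/2) z := (hasDerivAt_id z).div_const 2
  have hsin : HasDerivAt (fun z : ℝ => Real.sin (z/2)) (Real.cos (z/2) * (1/2)) z :=
    h2.sin
  have hcos : HasDerivAt (fun z : ℝ => Real.cos (z/2)) (-Real.sin (z/2) * (1/2)) z :=
    h2.cos
  have hden1 : HasDerivAt (fun z : ℝ => 2*Real.sin (z/2)^2)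
      (2*(2*Real.sin (z/2)^1*(Real.cos (z/2)*(1/2)))) z := (hsin.pow 2).const_mul 2
  have hden2 : HasDerivAt (fun z : ℝ => 4*Real.sin (z/2)^3)
      (4*(3*Real.sin (z/2)^2*(Real.cos (z/2)*(1/2)))) z := (hsin.pow 3).const_mul 4
  have ht1 := (hasDerivAt_const z (1:ℝ)).div hden1 (by positivity)
  have ht2 := ((hasDerivAt_id z).mul hcos).div hden2 (by positivity)
  have := (ht1.sub ht2).sub_const l₂
  refine this.congr_deriv ?_
  simp only [Pi.mul_apply, id]
  field_simp
  ring

lemma hu (l₁ l₂ z : ℝ) (hz : 0 < z) (hzπ : z < π) :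
    HasDerivAt (fun z => z^2/(2*Real.sin (z/2)^2) - l₂*z^2 + l₁)
      (2*z*(1/(2*Real.sin (z/2)^2) - z*Real.cos (z/2)/(4*Real.sin (z/2)^3) - l₂)) z := by
  have hS := (sinhalf_pos hz hzπ).ne'
  have h2 : HasDerivAt (fun z : ℝ => z/2) (1/2) z := (hasDerivAt_id z).div_const 2
  have hsin : HasDerivAt (fun z : ℝ => Real.sin (z/2)) (Real.cos (z/2) * (1/2)) z :=
    h2.sin
  have hden1 : HasDerivAt (fun z : ℝ => 2*Real.sin (z/2)^2)
      (2*(2*Real.sin (z/2)^1*(Real.cos (z/2)*(1/2)))) z := (hsin.pow 2).const_mul 2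
  have hz2 : HasDerivAt (fun z : ℝ => z^2) (2*z^1) z := by simpa using hasDerivAt_pow 2 z
  have := ((hz2.div hden1 (by positivity)).sub (hz2.const_mul l₂)).add_const l₁
  refine this.congr_deriv ?_
  field_simp
  ring

lemma G_conv (l₁ l₂ : ℝ) : StrictConvexOn ℝ (Set.Ioo (0:ℝ) (π^2))
    (fun s => s/(2*Real.sin (Real.sqrt s/2)^2) - l₂*s + l₁) := by
  set V : ℝ → ℝ := fun s => 1/(2*Real.sin (Real.sqrt s/2)^2) -
    Real.sqrt s*Real.cos (Real.sqrt s/2)/(4*Real.sin (Real.sqrt s/2)^3) - l₂ with hVdef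
  have hzbound : ∀ s ∈ Set.Ioo (0:ℝ) (π^2), 0 < Real.sqrt s ∧ Real.sqrt s < π := by
    intro s hs
    refine ⟨Real.sqrt_pos.2 hs.1, ?_⟩
    have := Real.sqrt_lt_sqrt hs.1.le hs.2
    rwa [Real.sqrt_sq Real.pi_pos.le] at this
  have key : ∀ s ∈ Set.Ioo (0:ℝ) (π^2),
      HasDerivAt (fun s => s/(2*Real.sin (Real.sqrt s/2)^2) - l₂*s + l₁) (V s) s := by
    intro s hs
    obtain ⟨hz0, hzπ⟩ := hzbound s hs
    have hsq := Real.hasDerivAt_sqrt hs.1.ne'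
    have hcomp := (hu l₁ l₂ (Real.sqrt s) hz0 hzπ).comp s hsq
    have hEq : (fun s => s/(2*Real.sin (Real.sqrt s/2)^2) - l₂*s + l₁)
        =ᶠ[nhds s] ((fun z => z^2/(2*Real.sin (z/2)^2) - l₂*z^2 + l₁) ∘ Real.sqrt) := by
      filter_upwards [Ioi_mem_nhds hs.1] with t ht
      simp only [Function.comp, Real.sq_sqrt (le_of_lt ht)]
    have := hcomp.congr_of_eventuallyEq hEq
    refine this.congr_deriv ?_
    rw [hVdef]
    field_simp
    try ring
  apply strictConvexOn_of_deriv2_pos (convex_Ioo _ _)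
  · exact fun s hs => ((key s hs).continuousAt).continuousWithinAt
  · intro s hs
    rw [interior_Ioo] at hs
    obtain ⟨hz0, hzπ⟩ := hzbound s hs
    set z := Real.sqrt s with hzd
    have hsq := Real.hasDerivAt_sqrt hs.1.ne'
    have hV := (hv l₂ z hz0 hzπ).comp s hsq
    have hEq : deriv (fun s => s/(2*Real.sin (Real.sqrt s/2)^2) - l₂*s + l₁) =ᶠ[nhds s] V := by
      filter_upwards [isOpen_Ioo.mem_nhds hs] with t ht
      exact (key t ht).deriv
    have h2 : deriv^[2] (fun s => s/(2*Real.sin (Real.sqrt s/2)^2) - l₂*s + l₁) s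
        = ((z*(Real.sin (z/2)^2 + 3*Real.cos (z/2)^2) - 6*Real.sin (z/2)*Real.cos (z/2)) /
          (8*Real.sin (z/2)^4)) * (1/(2*z)) := by
      simp only [Function.iterate_succ_apply', Function.iterate_zero_apply]
      rw [hEq.deriv_eq]
      exact hV.deriv
    rw [h2]
    have hS := sinhalf_pos hz0 hzπ
    have hnum : z*(Real.sin (z/2)^2 + 3*Real.cos (z/2)^2) - 6*Real.sin (z/2)*Real.cos (z/2)
        = z*(2 + Real.cos z) - 3*Real.sin z := by
      have hc : Real.cos z = 2*Real.cos (z/2)^2 - 1 := by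
        rw [show z = 2*(z/2) by ring, Real.cos_two_mul]; ring_nf
      have hs' : Real.sin z = 2*Real.sin (z/2)*Real.cos (z/2) := by
        rw [show z = 2*(z/2) by ring, Real.sin_two_mul]; ring_nf
      have hp := Real.sin_sq_add_cos_sq (z/2)
      nlinarith [hp]
    rw [hnum]
    have := aux3 z ⟨hz0, hzπ⟩
    positivity

lemma convex_two_zeros {S : Set ℝ} {f : ℝ → ℝ} (hf : StrictConvexOn ℝ S f) :
    {x ∈ S | f x = 0}.encard ≤ 2 := by
  by_contra h
  push_neg at h
  have h3 : (3 : ℕ∞) ≤ {x ∈ S | f x = 0}.encard := by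
    exact Order.add_one_le_of_lt h
  obtain ⟨t, hts, htc⟩ := Set.exists_subset_encard_eq h3
  obtain ⟨a, b, c, hab, hac, hbc, rfl⟩ := Set.encard_eq_three.1 htc
  have ha := hts (by simp : a ∈ ({a,b,c} : Set ℝ))
  have hb := hts (by simp : b ∈ ({a,b,c} : Set ℝ))
  have hc := hts (by simp : c ∈ ({a,b,c} : Set ℝ))
  have core : ∀ x y z : ℝ, x ∈ S ∧ f x = 0 → y ∈ S ∧ f y = 0 → z ∈ S ∧ f z = 0 →
      x < y → y < z → False := by
    intro x y z hx hy hz hxy hyz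
    have hzx : 0 < z - x := by linarith
    have ha' : 0 < (z - y) / (z - x) := div_pos (by linarith) hzx
    have hb' : 0 < (y - x) / (z - x) := div_pos (by linarith) hzx
    have hab' : (z - y) / (z - x) + (y - x) / (z - x) = 1 := by field_simp; ring
    have := hf.2 hx.1 hz.1 (by linarith : x ≠ z) ha' hb' hab'
    rw [smul_eq_mul, smul_eq_mul, hx.2, hz.2] at this
    have hy' : (z - y) / (z - x) * x + (y - x) / (z - x) * z = y := by
      field_simp; ring
    rw [hy'] at this
    simp [hy.2] at this
  rcases hab.lt_or_gt with h1 | h1 <;> rcases hac.lt_or_gt with h2 | h2 <;>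
    rcases hbc.lt_or_gt with h3 | h3
  · exact core a b c ha hb hc h1 h3
  · exact core a c b ha hc hb h2 h3
  · linarith
  · exact core c a b hc ha hb h2 h1
  · exact core b a c hb ha hc h1 h2
  · linarith
  · exact core b c a hb hc ha h3 h2
  · exact core c b a hc hb ha h3 h1

theorem stmt_13 (l₁ l₂ : ℝ) :
    {z ∈ Set.Ioo (0 : ℝ) π |
      -1 / (2 * Real.sin (z / 2) ^ 2) - l₁ / z ^ 2 + l₂ = 0}.encard ≤ 2 := by
  have hconv : StrictConvexOn ℝ (Set.Ioo (0:ℝ) (π^2))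
      (fun s => s/(2*Real.sin (Real.sqrt s/2)^2) - l₂*s + l₁) := G_conv l₁ l₂
  have hT := convex_two_zeros hconv
  set S := {z ∈ Set.Ioo (0 : ℝ) π |
      -1 / (2 * Real.sin (z / 2) ^ 2) - l₁ / z ^ 2 + l₂ = 0} with hSdef
  have hinj : Set.InjOn (fun z : ℝ => z^2) S := by
    intro a ha b hb hab
    have ha0 : 0 < a := ha.1.1
    have hb0 : 0 < b := hb.1.1
    simp only at hab
    nlinarith [sq_nonneg (a - b), sq_nonneg (a + b)]
  have himg : (fun z : ℝ => z^2) '' S ⊆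
      {s ∈ Set.Ioo (0:ℝ) (π^2) |
        (fun s => s/(2*Real.sin (Real.sqrt s/2)^2) - l₂*s + l₁) s = 0} := by
    rintro _ ⟨z, ⟨⟨hz0, hzπ⟩, hΦ⟩, rfl⟩
    have hsq : Real.sqrt (z^2) = z := Real.sqrt_sq hz0.le
    have hS0 : Real.sin (z/2) ≠ 0 := by
      have : 0 < Real.sin (z/2) :=
        Real.sin_pos_of_pos_of_lt_pi (by linarith) (by linarith [Real.pi_pos])
      exact this.ne'
    refine ⟨⟨by positivity, show z^2 < π^2 by nlinarith [mul_pos (sub_pos.2 hzπ) (by linarith [Real.pi_pos] : (0:ℝ) < π + z)]⟩, ?_⟩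
    simp only [hsq]
    have hz0' : z ≠ 0 := hz0.ne'
    field_simp at hΦ ⊢
    linarith [hΦ]
  calc S.encard = ((fun z : ℝ => z^2) '' S).encard := (hinj.encard_image).symm
    _ ≤ _ := Set.encard_mono himg
    _ ≤ 2 := hT
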